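/- Let γ ∈ Sⁿ⁻¹ with γₙ ≠ 0 and define for 1 ≤ i ≤ n−1 the 𝔰𝔬(n)-valued functions X_i(g) = γ ∧ (e_i − (γ_i/γₙ) eₙ) on {g ∈ SO(n) : (g⁻¹eₙ)ₙ ≠ 0}, γ = g⁻¹eₙ. Then their Lie bracket (as vector fields on SO(n) in the left trivialization) is [X_i, X_j](g) = (e_i − (γ_i/γₙ) eₙ) ∧ (e_j − (γ_j/γₙ) eₙ). -/

import Mathlib

open Matrix BigOperators

noncomputable section

/-- `u ∧ v := u vᵀ − v uᵀ ∈ 𝔰𝔬(N)`. -/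
def wedgeVec {N : ℕ} (u v : Fin N → ℝ) : Matrix (Fin N) (Fin N) ℝ :=
  Matrix.of fun i j => u i * v j - v i * u j

/-- The Lie bracket of vector fields on `SO(N)` in the left trivialization
`T_g SO(N) ≅ 𝔰𝔬(N)`:
`[Y,Z](g) = dZ_g(gY(g)) − dY_g(gZ(g)) + [Y(g),Z(g)]`, where directional
derivatives are computed entrywise along the curves `t ↦ g exp(t Y(g))`. -/
def bracketLT {N : ℕ}
    (Y Z : Matrix (Fin N) (Fin N) ℝ → Matrix (Fin N) (Fin N) ℝ)
    (g : Matrix (Fin N) (Fin N) ℝ) : Matrix (Fin N) (Fin N) ℝ :=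
  Matrix.of fun k l =>
    deriv (fun t : ℝ => Z (g * NormedSpace.exp (t • Y g)) k l) 0
      - deriv (fun t : ℝ => Y (g * NormedSpace.exp (t • Z g)) k l) 0
      + (Y g * Z g - Z g * Y g) k l

/-- `γ(h) = h⁻¹ e_last` for `h ∈ SO(n+1)`, i.e. `γ_k = h_{last,k}`. -/
def γfun {n : ℕ} (h : Matrix (Fin (n + 1)) (Fin (n + 1)) ℝ) : Fin (n + 1) → ℝ :=
  fun m => h (Fin.last n) m

/-- `w_i(h) = e_i − (γ_i/γ_last) e_last` for `1 ≤ i ≤ n−1`. -/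
def wfun {n : ℕ} (i : Fin n) (h : Matrix (Fin (n + 1)) (Fin (n + 1)) ℝ) :
    Fin (n + 1) → ℝ :=
  (Pi.single (Fin.castSucc i) 1 : Fin (n + 1) → ℝ) -
    (γfun h (Fin.castSucc i) / γfun h (Fin.last n)) • (Pi.single (Fin.last n) 1 : Fin (n + 1) → ℝ)

lemma entryDeriv {N : ℕ} (g M : Matrix (Fin N) (Fin N) ℝ) (k m : Fin N) :
    HasDerivAt (fun t : ℝ => (g * NormedSpace.exp (t • M)) k m) ((g * M) k m) 0 := by
  letI : SeminormedRing (Matrix (Fin N) (Fin N) ℝ) := Matrix.linftyOpSemiNormedRing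
  letI : NormedRing (Matrix (Fin N) (Fin N) ℝ) := Matrix.linftyOpNormedRing
  letI : NormedAlgebra ℝ (Matrix (Fin N) (Fin N) ℝ) := Matrix.linftyOpNormedAlgebra
  have h1 : HasDerivAt (fun t : ℝ => NormedSpace.exp (t • M)) M 0 := by
    have h0 := hasDerivAt_exp_smul_const M (0 : ℝ)
    simp only [zero_smul, NormedSpace.exp_zero, one_mul] at h0
    exact h0
  let L : Matrix (Fin N) (Fin N) ℝ →ₗ[ℝ] ℝ :=
    { toFun := fun X => (g * X) k m
      map_add' := by intro X Y; simp [Matrix.mul_add]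
      map_smul' := by intro c X; simp [Matrix.mul_smul] }
  have := (L.toContinuousLinearMap.hasFDerivAt
    (x := NormedSpace.exp ((0:ℝ) • M))).comp_hasDerivAt 0 h1
  exact this

lemma sum_mul_single {N : ℕ} (f : Fin N → ℝ) (m : Fin N) :
    ∑ x, f x * (Pi.single m 1 : Fin N → ℝ) x = f m := by
  simp [Pi.single_apply, mul_ite]

variable {n : ℕ} (g : Matrix (Fin (n + 1)) (Fin (n + 1)) ℝ)

lemma hsum (hO : g * g.transpose = 1) :
    ∑ x, γfun g x * γfun g x = 1 := by
  have := congrFun (congrFun hO (Fin.last n)) (Fin.last n)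
  simpa [Matrix.mul_apply, γfun] using this

lemma hdot (i : Fin n) (hγn : γfun g (Fin.last n) ≠ 0) :
    ∑ x, γfun g x * wfun i g x = 0 := by
  have h : ∀ x, γfun g x * wfun i g x =
      γfun g x * (Pi.single (Fin.castSucc i) 1 : Fin (n+1) → ℝ) x -
        (γfun g (Fin.castSucc i) / γfun g (Fin.last n)) *
          (γfun g x * (Pi.single (Fin.last n) 1 : Fin (n+1) → ℝ) x) := by
    intro x; simp [wfun]; ring
  rw [Finset.sum_congr rfl fun x _ => h x, Finset.sum_sub_distrib, ← Finset.mul_sum,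
    sum_mul_single, sum_mul_single]
  field_simp
  ring

lemma derivγ (i : Fin n) (hO : g * g.transpose = 1) (hγn : γfun g (Fin.last n) ≠ 0)
    (m : Fin (n + 1)) :
    HasDerivAt (fun t : ℝ =>
        (g * NormedSpace.exp (t • wedgeVec (γfun g) (wfun i g))) (Fin.last n) m)
      (wfun i g m) 0 := by
  have h := entryDeriv g (wedgeVec (γfun g) (wfun i g)) (Fin.last n) m
  have hv : (g * wedgeVec (γfun g) (wfun i g)) (Fin.last n) m = wfun i g m := by
    have h1 : ∀ x, g (Fin.last n) x * wedgeVec (γfun g) (wfun i g) x m =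
        (γfun g x * γfun g x) * wfun i g m - (γfun g x * wfun i g x) * γfun g m := by
      intro x; simp [wedgeVec, γfun]; ring
    rw [Matrix.mul_apply, Finset.sum_congr rfl fun x _ => h1 x, Finset.sum_sub_distrib,
      ← Finset.sum_mul, ← Finset.sum_mul, hsum g hO, hdot g i hγn]
    ring
  rwa [hv] at h

lemma qsymm (i j : Fin n) (hγn : γfun g (Fin.last n) ≠ 0) :
    (wfun i g (Fin.castSucc j) * γfun g (Fin.last n)
        - γfun g (Fin.castSucc j) * wfun i g (Fin.last n)) / γfun g (Fin.last n) ^ 2 =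
    (wfun j g (Fin.castSucc i) * γfun g (Fin.last n)
        - γfun g (Fin.castSucc i) * wfun j g (Fin.last n)) / γfun g (Fin.last n) ^ 2 := by
  simp only [wfun, Pi.sub_apply, Pi.smul_apply, smul_eq_mul, Pi.single_apply,
    if_neg (Fin.castSucc_lt_last j).ne, if_neg (Fin.castSucc_lt_last i).ne,
    if_neg (Fin.castSucc_lt_last j).ne', if_neg (Fin.castSucc_lt_last i).ne', if_pos rfl]
  by_cases h : Fin.castSucc i = Fin.castSucc j
  · rw [if_pos h.symm, if_pos h]
    field_simp; ring
  · rw [if_neg (fun e => h e.symm), if_neg h]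
    field_simp; ring

lemma hcomm (i j : Fin n) (hO : g * g.transpose = 1) (hγn : γfun g (Fin.last n) ≠ 0)
    (k l : Fin (n + 1)) :
    (wedgeVec (γfun g) (wfun i g) * wedgeVec (γfun g) (wfun j g)
      - wedgeVec (γfun g) (wfun j g) * wedgeVec (γfun g) (wfun i g)) k l =
    wfun j g k * wfun i g l - wfun i g k * wfun j g l := by
  rw [Matrix.sub_apply, Matrix.mul_apply, Matrix.mul_apply, ← Finset.sum_sub_distrib]
  have h : ∀ x, wedgeVec (γfun g) (wfun i g) k x * wedgeVec (γfun g) (wfun j g) x l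
      - wedgeVec (γfun g) (wfun j g) k x * wedgeVec (γfun g) (wfun i g) x l =
      (γfun g k * wfun j g l - wfun j g k * γfun g l) * (γfun g x * wfun i g x)
      - (γfun g k * wfun i g l - wfun i g k * γfun g l) * (γfun g x * wfun j g x)
      + (wfun j g k * wfun i g l - wfun i g k * wfun j g l) * (γfun g x * γfun g x) := by
    intro x; simp [wedgeVec]; ring
  rw [Finset.sum_congr rfl fun x _ => h x]
  rw [Finset.sum_add_distrib, Finset.sum_sub_distrib, ← Finset.mul_sum, ← Finset.mul_sum,
    ← Finset.mul_sum, hsum g hO, hdot g i hγn, hdot g j hγn]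
  ring

lemma derivEntry (i j : Fin n) (hO : g * g.transpose = 1)
    (hγn : γfun g (Fin.last n) ≠ 0) (k l : Fin (n + 1)) :
    deriv (fun t : ℝ =>
        wedgeVec (γfun (g * NormedSpace.exp (t • wedgeVec (γfun g) (wfun i g))))
          (wfun j (g * NormedSpace.exp (t • wedgeVec (γfun g) (wfun i g)))) k l) 0
    = wfun i g k * wfun j g l - wfun j g k * wfun i g l
      - ((wfun i g (Fin.castSucc j) * γfun g (Fin.last n)
            - γfun g (Fin.castSucc j) * wfun i g (Fin.last n)) / γfun g (Fin.last n) ^ 2)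
        * (γfun g k * (Pi.single (Fin.last n) 1 : Fin (n+1) → ℝ) l
            - (Pi.single (Fin.last n) 1 : Fin (n+1) → ℝ) k * γfun g l) := by
  set A := wedgeVec (γfun g) (wfun i g) with hA
  set ln := Fin.last n
  set cj := Fin.castSucc j
  have e0 : g * NormedSpace.exp ((0:ℝ) • A) = g := by
    rw [zero_smul, NormedSpace.exp_zero, mul_one]
  have hφ : ∀ m, HasDerivAt (fun t : ℝ => (g * NormedSpace.exp (t • A)) ln m)
      (wfun i g m) 0 := derivγ g i hO hγn
  have hne : (g * NormedSpace.exp ((0:ℝ) • A)) ln ln ≠ 0 := by rw [e0]; exact hγn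
  have hr := (hφ cj).div (hφ ln) hne
  rw [e0] at hr
  have hW : ∀ m, HasDerivAt (fun t : ℝ => (Pi.single cj 1 : Fin (n+1) → ℝ) m
        - ((g * NormedSpace.exp (t • A)) ln cj / (g * NormedSpace.exp (t • A)) ln ln)
          * (Pi.single ln 1 : Fin (n+1) → ℝ) m)
      (-((wfun i g cj * γfun g ln - γfun g cj * wfun i g ln) / γfun g ln ^ 2
          * (Pi.single ln 1 : Fin (n+1) → ℝ) m)) 0 := by
    intro m
    exact ((hasDerivAt_const (0:ℝ) ((Pi.single cj 1 : Fin (n+1) → ℝ) m)).sub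
      (hr.mul_const ((Pi.single ln 1 : Fin (n+1) → ℝ) m))).congr_deriv (by simp [γfun, ln])
  have hF := ((hφ k).mul (hW l)).sub ((hW k).mul (hφ l))
  rw [e0] at hF
  have hfun : (fun t : ℝ =>
      wedgeVec (γfun (g * NormedSpace.exp (t • A)))
        (wfun j (g * NormedSpace.exp (t • A))) k l) =
      (fun t : ℝ => (g * NormedSpace.exp (t • A)) ln k *
          ((Pi.single cj 1 : Fin (n+1) → ℝ) l
            - ((g * NormedSpace.exp (t • A)) ln cj / (g * NormedSpace.exp (t • A)) ln ln)
              * (Pi.single ln 1 : Fin (n+1) → ℝ) l)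
        - ((Pi.single cj 1 : Fin (n+1) → ℝ) k
            - ((g * NormedSpace.exp (t • A)) ln cj / (g * NormedSpace.exp (t • A)) ln ln)
              * (Pi.single ln 1 : Fin (n+1) → ℝ) k) * (g * NormedSpace.exp (t • A)) ln l) := by
    funext t
    simp [wedgeVec, wfun, γfun, ln, cj]
  rw [hfun]; refine hF.deriv.trans ?_
  have hwj : ∀ m, wfun j g m = (Pi.single cj 1 : Fin (n+1) → ℝ) m
      - (γfun g cj / γfun g ln) * (Pi.single ln 1 : Fin (n+1) → ℝ) m := by
    intro m; simp [wfun, ln, cj]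
  rw [hwj l, hwj k]
  have hg : ∀ m : Fin (n+1), g ln m = γfun g m := fun _ => rfl
  simp only [hg]
  field_simp
  ring

/-- For `g ∈ SO(n+1)` with `γ_last ≠ 0`, the vector fields
`X_i(h) = γ(h) ∧ (e_i − (γ_i/γ_last) e_last)` satisfy
`[X_i, X_j](g) = (e_i − (γ_i/γ_last) e_last) ∧ (e_j − (γ_j/γ_last) e_last)`. -/
theorem stmt18 {n : ℕ} (i j : Fin n)
    (g : Matrix (Fin (n + 1)) (Fin (n + 1)) ℝ)
    (hO : g * g.transpose = 1) (hdet : g.det = 1)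
    (hγn : γfun g (Fin.last n) ≠ 0) :
    bracketLT (fun h => wedgeVec (γfun h) (wfun i h))
        (fun h => wedgeVec (γfun h) (wfun j h)) g =
      wedgeVec (wfun i g) (wfun j g) := by
  ext k l
  simp only [bracketLT, Matrix.of_apply]
  rw [derivEntry g i j hO hγn k l, derivEntry g j i hO hγn k l, hcomm g i j hO hγn k l,
    qsymm g i j hγn]
  simp only [wedgeVec, Matrix.of_apply]
  ring
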